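/- Let d ≥ 2 and n ≥ 0 be integers, and let M be the ℤ[S_d]-module given by the direct sum of (n+1) copies of the trivial representation ℤ, one copy of U_d, and (n+1) copies of the standard representation T_d. Then H¹(S_d, M) = 0. -/

import Mathlib

open Pointwise

/-- The set of 2-element subsets of `{1, ..., d}`, the basis of `U_d`. -/
abbrev TwoSubsets (d : ℕ) : Type := {s : Finset (Fin d) // s.card = 2}

/-- A basis for the module `ℤ_triv^{n+1} ⊕ U_d ⊕ T_d^{n+1}`: `n+1` fixed points,
the 2-element subsets of `{1,...,d}`, and `n+1` copies of `{1,...,d}`. -/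
abbrev PicBasis (d n : ℕ) : Type := Fin (n + 1) ⊕ TwoSubsets d ⊕ (Fin (n + 1) × Fin d)

/-- The `S_d`-action: trivial on the first summand, `τ • {i,j} = {τ i, τ j}` on the
second, and `τ • (k, i) = (k, τ i)` on the third. -/
instance (d n : ℕ) : MulAction (Equiv.Perm (Fin d)) (PicBasis d n) where
  smul σ x :=
    match x with
    | Sum.inl a => Sum.inl a
    | Sum.inr (Sum.inl s) => Sum.inr (Sum.inl ⟨σ • s.1, by
        rw [Finset.card_smul_finset]; exact s.2⟩)
    | Sum.inr (Sum.inr (k, i)) => Sum.inr (Sum.inr (k, σ i))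
  one_smul x := by
    rcases x with a | s | ⟨k, i⟩ <;> simp_all [HSMul.hSMul, SMul.smul, Subtype.ext_iff]
  mul_smul a b x := by
    rcases x with c | s | ⟨k, i⟩ <;>
      simp_all [HSMul.hSMul, SMul.smul, Subtype.ext_iff, mul_smul, Finset.image_image]
    rfl

section General

open groupCohomology

variable {G X : Type} [Group G] [MulAction G X]

/-- The underlying finitely supported function of an element of the permutation module. -/
def ev (v : Rep.ofMulAction ℤ G X) : X →₀ ℤ := MonoidAlgebra.coeff (R := ℤ) (M := X) v

lemma ev_add (a b : Rep.ofMulAction ℤ G X) : ev (a + b) = ev a + ev b := rfl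
lemma ev_sub (a b : Rep.ofMulAction ℤ G X) : ev (a - b) = ev a - ev b := rfl
lemma ev_rho (g : G) (v : Rep.ofMulAction ℤ G X) (x : X) :
    ev ((Rep.ofMulAction ℤ G X).ρ g v) x = ev v (g⁻¹ • x) :=
  Representation.coeff_ofMulAction g (v : MonoidAlgebra ℤ X) x

lemma cocycle_eval (f : cocycles₁ (Rep.ofMulAction ℤ G X)) (g h : G) (x : X) :
    ev (f (g * h)) x = ev (f h) (g⁻¹ • x) + ev (f g) x := by
  have h2 := (mem_cocycles₁_iff (A := Rep.ofMulAction ℤ G X) f).1 f.2 g h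
  calc ev (f (g * h)) x = ev ((Rep.ofMulAction ℤ G X).ρ g (f h) + f g) x := by rw [h2]
    _ = ev ((Rep.ofMulAction ℤ G X).ρ g (f h)) x + ev (f g) x := by rw [ev_add]; rfl
    _ = ev (f h) (g⁻¹ • x) + ev (f g) x := by rw [ev_rho]

lemma cocycle_one (f : cocycles₁ (Rep.ofMulAction ℤ G X)) : ev (f 1) = 0 := by
  rw [cocycles₁_map_one f]; rfl

lemma fix_pow (h : G) (x₀ : X) (hx : h • x₀ = x₀) (n : ℕ) : (h ^ n) • x₀ = x₀ := by
  induction n with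
  | zero => simp
  | succ n ih => rw [pow_succ, mul_smul, hx, ih]

lemma cocycle_pow (f : cocycles₁ (Rep.ofMulAction ℤ G X)) (h : G) (x₀ : X)
    (hx : h • x₀ = x₀) (n : ℕ) :
    ev (f (h ^ n)) x₀ = n • ev (f h) x₀ := by
  induction n with
  | zero => rw [pow_zero, cocycle_one]; simp
  | succ n ih =>
    have hinv : (h ^ n)⁻¹ • x₀ = x₀ := by
      rw [inv_smul_eq_iff, fix_pow h x₀ hx n]
    rw [pow_succ, cocycle_eval f (h ^ n) h x₀, hinv, ih]
    push_cast
    ring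

lemma cocycle_stab [Finite G] (f : cocycles₁ (Rep.ofMulAction ℤ G X)) (h : G) (x₀ : X)
    (hx : h • x₀ = x₀) : ev (f h) x₀ = 0 := by
  have hn : h ^ orderOf h = 1 := pow_orderOf_eq_one h
  have h1 := cocycle_pow f h x₀ hx (orderOf h)
  rw [hn, cocycle_one f] at h1
  have hpos : 0 < orderOf h := orderOf_pos h
  have h2 : (orderOf h : ℤ) * ev (f h) x₀ = 0 := by
    rw [← nsmul_eq_mul]
    exact h1.symm
  rcases mul_eq_zero.1 h2 with h3 | h3
  · exact absurd h3 (by exact_mod_cast hpos.ne')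
  · exact h3

lemma cocycle_welldef [Finite G] (f : cocycles₁ (Rep.ofMulAction ℤ G X)) (a b : G) (x₀ : X)
    (ha : a • x₀ = x₀) : ev (f (b * a)) (b • x₀) = ev (f b) (b • x₀) := by
  rw [cocycle_eval f b a (b • x₀), inv_smul_smul, cocycle_stab f a x₀ ha, zero_add]

theorem H1_perm_subsingleton [Finite G] [Finite X] :
    Subsingleton (groupCohomology.H1 (Rep.ofMulAction ℤ G X)) := by
  refine subsingleton_of_forall_eq 0 fun x => ?_
  refine H1_induction_on x fun f => ?_
  rw [H1π_eq_zero_iff]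
  classical
  set r : X → X := fun x => (Quotient.mk (MulAction.orbitRel G X) x).out with hr
  have hrel : ∀ x : X, ∃ g : G, g • r x = x := by
    intro x
    have hmem : (Quotient.mk (MulAction.orbitRel G X) x).out ∈ MulAction.orbit G x :=
      (MulAction.orbitRel_apply (G := G)).1 (Quotient.mk_out (s := MulAction.orbitRel G X) x)
    obtain ⟨g, hg⟩ := hmem
    refine ⟨g⁻¹, ?_⟩
    rw [hr]; simp only; rw [← hg]; simp
  choose gx hgx using hrel
  have hrorbit : ∀ (g : G) (x : X), r (g⁻¹ • x) = r x := by
    intro g x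
    have hq : Quotient.mk (MulAction.orbitRel G X) (g⁻¹ • x) = Quotient.mk _ x :=
      Quotient.sound ⟨g⁻¹, rfl⟩
    simp [hr, hq]
  have hwd : ∀ (b : G) (x : X), b • r x = x → ev (f b) x = ev (f (gx x)) x := by
    intro b x hb
    have ha : (b⁻¹ * gx x) • r x = r x := by
      rw [mul_smul, hgx x, inv_smul_eq_iff]
      exact hb.symm
    have h2 := cocycle_welldef f (b⁻¹ * gx x) b (r x) ha
    rw [hb] at h2
    rw [← h2]
    congr 1
    group
  set m : Rep.ofMulAction ℤ G X :=
    MonoidAlgebra.ofCoeff (Finsupp.equivFunOnFinite.symm (fun x => -(ev (f (gx x)) x)) : X →₀ ℤ) with hm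
  have hmx : ∀ x : X, ev m x = -(ev (f (gx x)) x) := fun x => rfl
  refine ⟨m, ?_⟩
  refine funext fun g => ?_
  show (Rep.ofMulAction ℤ G X).ρ g m - m = f g
  have hpoint : ∀ x : X,
      ev ((Rep.ofMulAction ℤ G X).ρ g m - m) x = ev (f g) x := by
    intro x
    rw [ev_sub, Finsupp.sub_apply, ev_rho]
    show ev m (g⁻¹ • x) - ev m x = ev (f g) x
    rw [hmx, hmx]
    set k := gx (g⁻¹ • x) with hk
    have hk1 : k • r x = g⁻¹ • x := by rw [hk, ← hrorbit g x]; exact hgx _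
    have hgk : (g * k) • r x = x := by rw [mul_smul, hk1]; simp
    have h1 : ev (f (gx x)) x = ev (f (g * k)) x := (hwd (g * k) x hgk).symm
    rw [h1, cocycle_eval f g k x]
    ring
  exact MonoidAlgebra.ext (Finsupp.ext hpoint)

end General

/-- For `d ≥ 2`, `n ≥ 0`, the module `M = ℤ_triv^{n+1} ⊕ U_d ⊕ T_d^{n+1}`
(the Picard group of `C^d_{g,n}` with its `S_d`-action) has `H¹(S_d, M) = 0`. -/
theorem stmt_5 (d n : ℕ) (hd : 2 ≤ d) :
    Subsingleton
      (groupCohomology.H1 (Rep.ofMulAction ℤ (Equiv.Perm (Fin d)) (PicBasis d n))) := by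
  exact H1_perm_subsingleton
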